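/- Let φ₁⁰, φ₂⁰ ∈ ℝⁿ satisfy (A+B)φ₁⁰ = 0 and (A+B)φ₂⁰ = (B+I)φ₁⁰. Define φ₁ ∈ ℝ^{(m+1)n} as the vector whose m+1 blocks all equal εφ₁⁰, and φ₂ ∈ ℝ^{(m+1)n} as the vector whose j-th block (j = 0, 1, …, m, counted from the top) equals ε(mφ₂⁰ − jφ₁⁰). Then (C − I)φ₁ = 0 and (C − I)φ₂ = φ₁, i.e. Cφ₁ = φ₁ and Cφ₂ = φ₂ + φ₁, so (φ₁, φ₂) is a Jordan chain of C for the eigenvalue 1. -/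

import Mathlib

open Matrix

/-- The Euler companion matrix `C` of the forward Euler discretization
`z_{k+1} = z_k + ε A z_k + ε B z_{k-m}`, with step size `ε = 1/m`, written in
`(m+1) × (m+1)` blocks of size `n × n`: the first block row is
`(I + εA, 0, …, 0, εB)`, the subdiagonal blocks are `I`, all other blocks vanish. -/
noncomputable def eulerC (n m : ℕ) (A B : Matrix (Fin n) (Fin n) ℝ) :
    Matrix (Fin (m+1) × Fin n) (Fin (m+1) × Fin n) ℝ :=
  fun ip jq =>
    if ip.1 = 0 then
      (if jq.1 = 0 then (if ip.2 = jq.2 then 1 else 0) + (1 / (m : ℝ)) * A ip.2 jq.2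
       else if (jq.1 : ℕ) = m then (1 / (m : ℝ)) * B ip.2 jq.2 else 0)
    else if (jq.1 : ℕ) + 1 = (ip.1 : ℕ) then (if ip.2 = jq.2 then 1 else 0) else 0

lemma eulerC_row0 (n m : ℕ) (hm : 0 < m) (A B : Matrix (Fin n) (Fin n) ℝ)
    (v : Fin (m+1) × Fin n → ℝ) (p : Fin n) :
    (eulerC n m A B *ᵥ v) (0, p) =
      v (0, p) + (1 / (m : ℝ)) * (A *ᵥ (fun q => v (0, q))) p
        + (1 / (m : ℝ)) * (B *ᵥ (fun q => v (Fin.last m, q))) p := by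
  simp only [mulVec, dotProduct, Fintype.sum_prod_type, eulerC, if_pos rfl, if_true]
  have key : ∀ j : Fin (m+1),
      (∑ q, (if j = 0 then (if p = q then 1 else 0) + (1 / (m : ℝ)) * A p q
        else if (j : ℕ) = m then (1 / (m : ℝ)) * B p q else 0) * v (j, q)) =
      (if j = 0 then v (0, p) + (1 / (m : ℝ)) * ∑ q, A p q * v (0, q) else 0) +
      (if j = Fin.last m then (1 / (m : ℝ)) * ∑ q, B p q * v (Fin.last m, q) else 0) := by
    intro j
    by_cases h0 : j = 0
    · subst h0
      have : ((0 : Fin (m+1)) : ℕ) ≠ m := by simp; omega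
      have hne : (0 : Fin (m+1)) ≠ Fin.last m := by
        simp [Fin.ext_iff]; omega
      simp [hne, add_mul, Finset.sum_add_distrib, ite_mul, Finset.mul_sum, mul_assoc]
    · by_cases hl : j = Fin.last m
      · subst hl
        simp [h0, Fin.val_last, Finset.mul_sum, mul_assoc]
      · have hlv : (j : ℕ) ≠ m := fun h => hl (Fin.ext (by simp [h]))
        simp [h0, hl, hlv]
  rw [Finset.sum_congr rfl fun j _ => key j]
  simp [Finset.sum_add_distrib, mulVec, dotProduct, add_assoc]

lemma eulerC_rowi (n m : ℕ) (A B : Matrix (Fin n) (Fin n) ℝ)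
    (v : Fin (m+1) × Fin n → ℝ) (i j : Fin (m+1)) (hij : (j : ℕ) + 1 = (i : ℕ))
    (p : Fin n) :
    (eulerC n m A B *ᵥ v) (i, p) = v (j, p) := by
  have hi : i ≠ 0 := by
    intro h; subst h; simp at hij
  simp only [mulVec, dotProduct, Fintype.sum_prod_type, eulerC, if_neg hi]
  have key : ∀ j' : Fin (m+1),
      (∑ q, (if (j' : ℕ) + 1 = (i : ℕ) then (if p = q then 1 else 0) else 0) * v (j', q))
      = if j' = j then v (j, p) else 0 := by
    intro j'
    by_cases h : j' = j
    · subst h; simp [hij, ite_mul]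
    · have hne : (j' : ℕ) + 1 ≠ (i : ℕ) := by
        have := Fin.val_ne_of_ne h; omega
      simp [hne, h]
  rw [Finset.sum_congr rfl fun j' _ => key j']
  simp

lemma mulVec_comb {n : ℕ} (M : Matrix (Fin n) (Fin n) ℝ) (a b : ℝ)
    (f g : Fin n → ℝ) (p : Fin n) :
    (M *ᵥ fun q => a * f q + b * g q) p = a * (M *ᵥ f) p + b * (M *ᵥ g) p := by
  simp only [mulVec, dotProduct]
  rw [Finset.mul_sum, Finset.mul_sum, ← Finset.sum_add_distrib]
  congr 1; ext q; ring

theorem stmt_3 (n m : ℕ) (hn : 0 < n) (hm : 0 < m) (A B : Matrix (Fin n) (Fin n) ℝ)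
    (φ₁0 φ₂0 : Fin n → ℝ)
    (h1 : (A + B) *ᵥ φ₁0 = 0)
    (h2 : (A + B) *ᵥ φ₂0 = (B + 1) *ᵥ φ₁0)
    (φ₁ φ₂ : Fin (m+1) × Fin n → ℝ)
    (hφ₁ : φ₁ = fun ip => (1 / (m : ℝ)) * φ₁0 ip.2)
    (hφ₂ : φ₂ = fun ip => (1 / (m : ℝ)) * ((m : ℝ) * φ₂0 ip.2 - (ip.1 : ℕ) * φ₁0 ip.2)) :
    eulerC n m A B *ᵥ φ₁ = φ₁ ∧ eulerC n m A B *ᵥ φ₂ = φ₂ + φ₁ := by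
  have hm' : (m : ℝ) ≠ 0 := Nat.cast_ne_zero.2 hm.ne'
  subst hφ₁ hφ₂
  have h1p : ∀ p, (A *ᵥ φ₁0) p + (B *ᵥ φ₁0) p = 0 := by
    intro p
    have := congrFun h1 p
    simpa [add_mulVec] using this
  have h2p : ∀ p, (A *ᵥ φ₂0) p + (B *ᵥ φ₂0) p = (B *ᵥ φ₁0) p + φ₁0 p := by
    intro p
    have := congrFun h2 p
    simpa [add_mulVec] using this
  constructor
  · funext ip
    obtain ⟨i, p⟩ := ip
    by_cases hi : i = 0
    · subst hi
      rw [eulerC_row0 n m hm]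
      have hf : (fun q => (1 / (m : ℝ)) * φ₁0 q) = fun q =>
          (1 / (m : ℝ)) * φ₁0 q + 0 * φ₁0 q := by funext q; ring
      simp only
      rw [hf, mulVec_comb, mulVec_comb]
      field_simp
      linear_combination h1p p
    · have hiv : (i : ℕ) ≠ 0 := fun h => hi (Fin.ext (by simp [h]))
      have hj : ((i : ℕ) - 1) < m + 1 := by omega
      rw [eulerC_rowi n m A B _ i ⟨(i : ℕ) - 1, hj⟩ (by simp; omega) p]
  · funext ip
    obtain ⟨i, p⟩ := ip
    by_cases hi : i = 0
    · subst hi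
      rw [eulerC_row0 n m hm]
      have hf0 : (fun q => (1 / (m : ℝ)) *
          ((m : ℝ) * φ₂0 q - (((0 : Fin (m+1)) : ℕ) : ℝ) * φ₁0 q)) = fun q =>
          ((1 / (m : ℝ)) * m) * φ₂0 q + 0 * φ₁0 q := by
        funext q; simp; ring
      have hfl : (fun q => (1 / (m : ℝ)) *
          ((m : ℝ) * φ₂0 q - (((Fin.last m : Fin (m+1)) : ℕ) : ℝ) * φ₁0 q)) = fun q =>
          ((1 / (m : ℝ)) * m) * φ₂0 q + (-((1 / (m : ℝ)) * m)) * φ₁0 q := by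
        funext q; simp [Fin.val_last]; ring
      simp only
      rw [hf0, hfl, mulVec_comb, mulVec_comb]
      simp only [Pi.add_apply, Fin.val_zero, Nat.cast_zero]
      field_simp
      linear_combination h2p p
    · have hiv : (i : ℕ) ≠ 0 := fun h => hi (Fin.ext (by simp [h]))
      have hj : ((i : ℕ) - 1) < m + 1 := by omega
      rw [eulerC_rowi n m A B _ i ⟨(i : ℕ) - 1, hj⟩ (by simp; omega) p]
      simp only [Pi.add_apply]
      rw [Nat.cast_sub (by omega : 1 ≤ (i : ℕ)), Nat.cast_one]
      ring
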